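/- Let n ≥ 1, let D* := {z ∈ ℂ : 0 < |z| < 1} be the punctured open unit disk, and let f : D* → ℂⁿ be holomorphic with finite energy ∫_{D*} ‖f′(z)‖² dλ(z) < ∞, where λ is Lebesgue measure on ℂ. Then f extends to a holomorphic map on the whole open unit disk, i.e. there is a holomorphic g : {|z| < 1} → ℂⁿ with g = f on D*. -/

import Mathlib

open MeasureTheory Metric Real Set Filter Topology Asymptotics

set_option linter.unusedSectionVars false

section AuxLemmas

variable {E : Type*} [NormedAddCommGroup E] [NormedSpace ℂ E] [CompleteSpace E]

lemma circle_mean_norm (g : ℂ → E) (c : ℂ) (ρ : ℝ) (hρ : 0 < ρ)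
    (hc : ContinuousOn g (closedBall c ρ))
    (hd : ∀ z ∈ ball c ρ, DifferentiableAt ℂ g z) :
    2 * π * ‖g c‖ ≤ ∫ θ in (0:ℝ)..(2 * π), ‖g (circleMap c ρ θ)‖ := by
  have hcauchy := Complex.circleIntegral_sub_center_inv_smul_of_differentiable_on_off_countable hρ
      Set.countable_empty hc (fun z hz => hd z hz.1)
  have h1 : 2 * π * ‖g c‖ = ‖(2 * π * Complex.I : ℂ) • g c‖ := by
    rw [norm_smul]
    simp [Real.pi_nonneg, abs_of_nonneg Real.pi_nonneg]
  rw [h1, ← hcauchy]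
  rw [circleIntegral]
  refine le_trans (intervalIntegral.norm_integral_le_integral_norm (by positivity)) ?_
  refine le_of_eq (intervalIntegral.integral_congr fun θ _ => ?_)
  rw [deriv_circleMap, norm_smul, norm_smul, circleMap_sub_center, norm_inv]
  have h2 : ‖circleMap 0 ρ θ * Complex.I‖ = ρ := by
    simp [abs_of_pos hρ]
  have h3 : ‖circleMap 0 ρ θ‖ = ρ := by simp [abs_of_pos hρ]
  rw [h2, h3]
  field_simp

lemma circle_mean_sq (g : ℂ → E) (c : ℂ) (ρ : ℝ) (hρ : 0 < ρ)
    (hc : ContinuousOn g (closedBall c ρ))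
    (hd : ∀ z ∈ ball c ρ, DifferentiableAt ℂ g z) :
    2 * π * ‖g c‖ ^ 2 ≤ ∫ θ in (0:ℝ)..(2 * π), ‖g (circleMap c ρ θ)‖ ^ 2 := by
  have hcm : Continuous fun θ : ℝ => ‖g (circleMap c ρ θ)‖ :=
    (hc.comp_continuous (continuous_circleMap c ρ)
      (fun θ => circleMap_mem_closedBall c hρ.le θ)).norm
  set h : ℝ → ℝ := fun θ => ‖g (circleMap c ρ θ)‖ with hh
  set A : ℝ := ∫ θ in (0:ℝ)..(2 * π), h θ ^ 2 with hA
  have hA0 : 0 ≤ A := by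
    rw [hA, intervalIntegral.integral_of_le (by positivity)]
    exact setIntegral_nonneg measurableSet_Ioc (fun θ _ => by positivity)
  have hint2 : IntervalIntegrable (fun θ => h θ ^ 2) volume 0 (2 * π) :=
    (hcm.pow 2).intervalIntegrable _ _
  have key : ∀ s : ℝ, 0 < s → s * (2 * π * ‖g c‖) ≤ π + s ^ 2 * A / 2 := by
    intro s hs
    have h1 := circle_mean_norm g c ρ hρ hc hd
    have h2 : s * (2 * π * ‖g c‖) ≤ s * ∫ θ in (0:ℝ)..(2 * π), h θ :=
      mul_le_mul_of_nonneg_left h1 hs.le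
    have h3 : s * ∫ θ in (0:ℝ)..(2 * π), h θ = ∫ θ in (0:ℝ)..(2 * π), s * h θ := by
      rw [← intervalIntegral.integral_const_mul]
    have h4 : ∫ θ in (0:ℝ)..(2 * π), s * h θ
        ≤ ∫ θ in (0:ℝ)..(2 * π), (s ^ 2 * h θ ^ 2 + 1) / 2 := by
      refine intervalIntegral.integral_mono_on (by positivity)
        ((continuous_const.mul hcm).intervalIntegrable _ _)
        ((((continuous_const.mul (hcm.pow 2)).add continuous_const).div_const 2).intervalIntegrable _ _) ?_
      intro θ _
      nlinarith [sq_nonneg (s * h θ - 1), (norm_nonneg (g (circleMap c ρ θ)) : 0 ≤ h θ)]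
    have h5 : ∫ θ in (0:ℝ)..(2 * π), (s ^ 2 * h θ ^ 2 + 1) / 2 = π + s ^ 2 * A / 2 := by
      rw [intervalIntegral.integral_div, intervalIntegral.integral_add
        ((hint2.const_mul _)) intervalIntegrable_const,
        intervalIntegral.integral_const_mul, intervalIntegral.integral_const]
      simp only [smul_eq_mul, sub_zero, ← hA]
      ring
    linarith
  have hπ : (0:ℝ) < π := Real.pi_pos
  rcases eq_or_lt_of_le (norm_nonneg (g c)) with hx0 | hxpos
  · rw [← hx0]
    simpa using hA0
  rcases eq_or_lt_of_le hA0 with hA0' | hApos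
  · exfalso
    have := key (1 / ‖g c‖) (by positivity)
    rw [← hA0'] at this
    have h7 : (1/‖g c‖) * (2*π*‖g c‖) = 2*π := by field_simp
    rw [h7] at this
    simp at this
    linarith
  · have hkey := key (2 * π * ‖g c‖ / A) (by positivity)
    have hexp : (2 * π * ‖g c‖ / A) * (2 * π * ‖g c‖) = (2 * π * ‖g c‖)^2 / A := by ring
    have hexp2 : (2 * π * ‖g c‖ / A) ^ 2 * A / 2 = (2 * π * ‖g c‖)^2 / (2 * A) := by
      field_simp
    rw [hexp, hexp2] at hkey
    have h6 : (2 * π * ‖g c‖)^2 / (2 * A) ≤ π := by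
      have hdbl : (2*π*‖g c‖)^2 / A = 2 * ((2*π*‖g c‖)^2/(2*A)) := by
        field_simp
      linarith [hkey, hdbl]
    rw [div_le_iff₀ (by positivity)] at h6
    nlinarith

lemma area_mean_sq (g : ℂ → E) (c : ℂ) (r : ℝ) (hr : 0 < r) {U : Set ℂ} (hU : IsOpen U)
    (hsub : closedBall c r ⊆ U) (hg : DifferentiableOn ℂ g U) :
    π * r ^ 2 * ‖g c‖ ^ 2 ≤ ∫ w in closedBall c r, ‖g w‖ ^ 2 := by
  have hπ : (0:ℝ) < π := Real.pi_pos
  set h : ℂ → ℝ := fun w => ‖g w‖ ^ 2 with hh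
  have hcont : ContinuousOn h U := (hg.continuousOn.norm).pow 2
  -- the function in polar coordinates
  set F : ℝ × ℝ → ℝ := fun p => p.1 * h (c + Complex.polarCoord.symm p) with hF
  have hsymm_cont : Continuous fun p : ℝ × ℝ => Complex.polarCoord.symm p := by
    have : ∀ p : ℝ × ℝ, Complex.polarCoord.symm p
        = (p.1 : ℂ) * (Real.cos p.2 + Real.sin p.2 * Complex.I) := fun p =>
      Complex.polarCoord_symm_apply p
    rw [show (fun p : ℝ × ℝ => Complex.polarCoord.symm p)
      = fun p : ℝ × ℝ => (p.1 : ℂ) * (Real.cos p.2 + Real.sin p.2 * Complex.I) from funext this]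
    fun_prop
  have habs : ∀ p : ℝ × ℝ, ‖Complex.polarCoord.symm p‖ = |p.1| :=
    Complex.norm_polarCoord_symm
  -- continuity of F on the compact rectangle
  have hmaps : ∀ p : ℝ × ℝ, p ∈ Icc (0:ℝ) r ×ˢ Icc (-π) π →
      c + Complex.polarCoord.symm p ∈ closedBall c r := by
    intro p hp
    rw [mem_closedBall, dist_eq_norm, add_sub_cancel_left, habs]
    rw [abs_of_nonneg hp.1.1]
    exact hp.1.2
  have hFcont : ContinuousOn F (Icc (0:ℝ) r ×ˢ Icc (-π) π) :=
    continuousOn_fst.mul (hcont.comp ((continuous_const.add hsymm_cont).continuousOn)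
      (fun p hp => hsub (hmaps p hp)))
  have hπle : -π ≤ π := by linarith
  -- integrability on the rectangle
  have hFi : IntegrableOn F (Ioc (0:ℝ) r ×ˢ Ioo (-π) π) volume :=
    (hFcont.integrableOn_compact (isCompact_Icc.prod isCompact_Icc)).mono_set
      (prod_mono Ioc_subset_Icc_self Ioo_subset_Icc_self)
  -- polar coordinates identity
  have htarget : polarCoord.target = Set.Ioi (0:ℝ) ×ˢ Set.Ioo (-π) π := rfl
  have hpolar : ∫ w in closedBall c r, h w = ∫ p in Ioc (0:ℝ) r ×ˢ Ioo (-π) π, F p := by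
    have h1 := Complex.integral_comp_polarCoord_symm
      (fun w => Set.indicator (closedBall c r) h (c + w))
    have h2 : ∫ w : ℂ, Set.indicator (closedBall c r) h (c + w)
        = ∫ w in closedBall c r, h w := by
      rw [integral_add_left_eq_self (fun w => Set.indicator (closedBall c r) h w) c,
        integral_indicator (measurableSet_closedBall)]
    have h3 : (∫ p in polarCoord.target,
          p.1 • Set.indicator (closedBall c r) h (c + Complex.polarCoord.symm p))
        = ∫ p in polarCoord.target,
          Set.indicator {p : ℝ × ℝ | p.1 ≤ r} F p := by
      refine setIntegral_congr_fun ?_ (fun p hp => ?_)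
      · rw [htarget]
        exact measurableSet_Ioi.prod measurableSet_Ioo
      · rw [htarget] at hp
        have hp1 : 0 < p.1 := hp.1
        by_cases hpr : p.1 ≤ r
        · have hmem : c + Complex.polarCoord.symm p ∈ closedBall c r := by
            rw [mem_closedBall, dist_eq_norm, add_sub_cancel_left, habs,
              abs_of_pos hp1]
            exact hpr
          rw [Set.indicator_of_mem hmem, Set.indicator_of_mem (by exact hpr)]
          rfl
        · have hmem : c + Complex.polarCoord.symm p ∉ closedBall c r := by
            rw [mem_closedBall, dist_eq_norm, add_sub_cancel_left, habs,
              abs_of_pos hp1]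
            exact hpr
          rw [Set.indicator_of_notMem hmem, Set.indicator_of_notMem (by exact hpr)]
          simp
    have h4 : (∫ p in polarCoord.target,
          Set.indicator {p : ℝ × ℝ | p.1 ≤ r} F p)
        = ∫ p in Ioc (0:ℝ) r ×ˢ Ioo (-π) π, F p := by
      have hseteq : polarCoord.target ∩ {p : ℝ × ℝ | p.1 ≤ r}
          = Ioc (0:ℝ) r ×ˢ Ioo (-π) π := by
        rw [htarget]
        ext p
        show (0 < p.1 ∧ p.2 ∈ Ioo (-π) π) ∧ p.1 ≤ r ↔ (0 < p.1 ∧ p.1 ≤ r) ∧ p.2 ∈ Ioo (-π) π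
        tauto
      rw [setIntegral_indicator (measurableSet_le (by fun_prop) (by fun_prop)), hseteq]
    rw [← h2, ← h1, h3, h4]
  -- Fubini
  have hFi' : IntegrableOn F (Ioc (0:ℝ) r ×ˢ Ioo (-π) π) (volume.prod volume) := by
    rwa [← Measure.volume_eq_prod]
  have hfub : (∫ p in Ioc (0:ℝ) r ×ˢ Ioo (-π) π, F p)
      = ∫ ρ in Ioc (0:ℝ) r, ∫ θ in Ioo (-π) π, F (ρ, θ) := by
    rw [Measure.volume_eq_prod]
    exact setIntegral_prod F hFi'
  -- the circle map identity
  have hcm_eq : ∀ ρ θ : ℝ, c + Complex.polarCoord.symm (ρ, θ) = circleMap c ρ θ := by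
    intro ρ θ
    rw [Complex.polarCoord_symm_apply, circleMap, Complex.exp_mul_I]
    push_cast
    ring
  -- inner bound
  have hinner : ∀ ρ ∈ Ioc (0:ℝ) r, ρ * (2 * π * ‖g c‖ ^ 2)
      ≤ ∫ θ in Ioo (-π) π, F (ρ, θ) := by
    intro ρ hρ
    have hρ0 : 0 < ρ := hρ.1
    have hcb : closedBall c ρ ⊆ U := (closedBall_subset_closedBall hρ.2).trans hsub
    have hmean := circle_mean_sq g c ρ hρ0 (hg.continuousOn.mono hcb)
      (fun z hz => hg.differentiableAt (hU.mem_nhds (hcb (ball_subset_closedBall hz))))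
    have heq : (∫ θ in Ioo (-π) π, F (ρ, θ))
        = ρ * ∫ θ in (0:ℝ)..(2 * π), h (circleMap c ρ θ) := by
      have e1 : (∫ θ in Ioo (-π) π, F (ρ, θ))
          = ρ * ∫ θ in Ioo (-π) π, h (circleMap c ρ θ) := by
        rw [← integral_const_mul]
        refine setIntegral_congr_fun measurableSet_Ioo (fun θ _ => ?_)
        simp only [hF]
        rw [hcm_eq]
      have e2 : (∫ θ in Ioo (-π) π, h (circleMap c ρ θ))
          = ∫ θ in (-π)..π, h (circleMap c ρ θ) := by
        rw [intervalIntegral.integral_of_le hπle, integral_Ioc_eq_integral_Ioo]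
      have hper : Function.Periodic (fun θ : ℝ => h (circleMap c ρ θ)) (2 * π) :=
        (periodic_circleMap c ρ).comp h
      have e3 : (∫ θ in (-π)..π, h (circleMap c ρ θ))
          = ∫ θ in (0:ℝ)..(2 * π), h (circleMap c ρ θ) := by
        have h6 := hper.intervalIntegral_add_eq (-π) 0
        rw [zero_add] at h6
        rw [show -π + 2*π = π by ring] at h6
        exact h6
      rw [e1, e2, e3]
    rw [heq]
    exact mul_le_mul_of_nonneg_left hmean hρ0.le
  -- integrability of the iterated integral
  have hInt : IntegrableOn (fun ρ => ∫ θ in Ioo (-π) π, F (ρ, θ)) (Ioc (0:ℝ) r) volume := by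
    have h5 : Integrable F ((volume.restrict (Ioc (0:ℝ) r)).prod (volume.restrict (Ioo (-π) π))) := by
      rw [Measure.prod_restrict]
      exact hFi'
    exact h5.integral_prod_left
  have hIntL : IntegrableOn (fun ρ => ρ * (2 * π * ‖g c‖ ^ 2)) (Ioc (0:ℝ) r) volume :=
    (continuous_id.mul continuous_const).integrableOn_Ioc
  have hmono := setIntegral_mono_on hIntL hInt measurableSet_Ioc hinner
  have hlhs : (∫ ρ in Ioc (0:ℝ) r, ρ * (2 * π * ‖g c‖ ^ 2)) = π * r ^ 2 * ‖g c‖ ^ 2 := by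
    rw [← intervalIntegral.integral_of_le hr.le, intervalIntegral.integral_mul_const,
      integral_id]
    ring
  rw [hpolar, hfub]
  rw [← hlhs]
  exact hmono

end AuxLemmas

/-- removal of singularities for finite-energy holomorphic maps on the
punctured unit disk: a holomorphic map `f : D* → ℂⁿ` with
`∫_{D*} ‖f′‖² < ∞` extends holomorphically over the puncture. -/
theorem removable_singularity_finite_energy (n : ℕ) (hn : 1 ≤ n)
    (f : ℂ → EuclideanSpace ℂ (Fin n))
    (hf : DifferentiableOn ℂ f (Metric.ball (0:ℂ) 1 \ {0}))
    (henergy : IntegrableOn (fun z => ‖deriv f z‖ ^ 2) (Metric.ball (0:ℂ) 1 \ {0})) :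
    ∃ g : ℂ → EuclideanSpace ℂ (Fin n),
      DifferentiableOn ℂ g (Metric.ball (0:ℂ) 1) ∧
      Set.EqOn g f (Metric.ball (0:ℂ) 1 \ {0}) := by
  have hπ : (0:ℝ) < π := Real.pi_pos
  set D : Set ℂ := Metric.ball (0:ℂ) 1 \ {0} with hDdef
  have hDopen : IsOpen D := Metric.isOpen_ball.sdiff isClosed_singleton
  have hball : Metric.ball (0:ℂ) 1 ∈ 𝓝 (0:ℂ) := Metric.ball_mem_nhds 0 one_pos
  set E₀ : ℝ := ∫ z in D, ‖deriv f z‖ ^ 2 with hE₀def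
  have hE₀0 : 0 ≤ E₀ :=
    setIntegral_nonneg hDopen.measurableSet (fun z _ => by positivity)
  set Cd : ℝ := Real.sqrt (4 * E₀ / π) with hCddef
  have hCd0 : 0 ≤ Cd := Real.sqrt_nonneg _
  have hderiv : DifferentiableOn ℂ (deriv f) D :=
    ((hf.analyticOnNhd hDopen).deriv).differentiableOn
  -- pointwise bound on the derivative
  have hpt : ∀ z : ℂ, 0 < ‖z‖ → ‖z‖ ≤ 3/5 → ‖deriv f z‖ ≤ Cd / ‖z‖ := by
    intro z hz1 hz2
    have hrpos : 0 < ‖z‖ / 2 := by positivity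
    have hsub2 : closedBall z (‖z‖/2) ⊆ D := by
      intro w hw
      rw [mem_closedBall, dist_eq_norm] at hw
      constructor
      · rw [mem_ball, dist_zero_right]
        calc ‖w‖ = ‖z + (w - z)‖ := by ring_nf
          _ ≤ ‖z‖ + ‖w - z‖ := norm_add_le _ _
          _ ≤ 3/5 + ‖z‖/2 := by linarith
          _ ≤ 3/5 + 3/10 := by linarith
          _ < 1 := by norm_num
      · intro hw0
        rw [Set.mem_singleton_iff] at hw0
        rw [hw0, zero_sub, norm_neg] at hw
        linarith
    have harea := area_mean_sq (deriv f) z (‖z‖/2) hrpos hDopen hsub2 hderiv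
    have hle : (∫ w in closedBall z (‖z‖/2), ‖deriv f w‖^2) ≤ E₀ :=
      setIntegral_mono_set henergy (Filter.Eventually.of_forall (fun x => by positivity))
        (HasSubset.Subset.eventuallyLE hsub2)
    have hsq : ‖deriv f z‖^2 ≤ (Cd/‖z‖)^2 := by
      have hCd2 : Cd^2 = 4*E₀/π := Real.sq_sqrt (by positivity)
      rw [div_pow, hCd2]
      rw [le_div_iff₀ (by positivity), le_div_iff₀ hπ]
      nlinarith [harea, hle]
    calc ‖deriv f z‖ = Real.sqrt (‖deriv f z‖^2) := (Real.sqrt_sq (norm_nonneg _)).symm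
      _ ≤ Real.sqrt ((Cd/‖z‖)^2) := Real.sqrt_le_sqrt hsq
      _ = Cd/‖z‖ := Real.sqrt_sq (by positivity)
  -- bound for f on the half sphere
  have hsph : Metric.sphere (0:ℂ) (1/2) ⊆ D := by
    intro w hw
    rw [mem_sphere_zero_iff_norm] at hw
    constructor
    · rw [mem_ball, dist_zero_right, hw]; norm_num
    · intro h0
      rw [Set.mem_singleton_iff] at h0
      rw [h0, norm_zero] at hw
      norm_num at hw
  obtain ⟨M, hM⟩ := (isCompact_sphere (0:ℂ) (1/2)).exists_bound_of_continuousOn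
    (hf.continuousOn.mono hsph)
  -- logarithmic bound for f
  have hfb : ∀ z : ℂ, 0 < ‖z‖ → ‖z‖ ≤ 1/2 →
      ‖f z‖ ≤ M + Cd * (Real.log (1/2) - Real.log ‖z‖) := by
    intro z hz1 hz2
    have hzne : z ≠ 0 := norm_pos_iff.mp hz1
    set u : ℂ := (↑‖z‖)⁻¹ * z with hu
    have hnu : ‖u‖ = 1 := by
      rw [hu, norm_mul, norm_inv, Complex.norm_real, Real.norm_eq_abs, abs_of_pos hz1]
      field_simp
    set γ : ℝ → ℂ := fun t => (t:ℂ) * u with hγdef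
    have hγnorm : ∀ t : ℝ, ‖γ t‖ = |t| := by
      intro t
      rw [hγdef]
      simp only []
      rw [norm_mul, hnu, mul_one, Complex.norm_real, Real.norm_eq_abs]
    have hγmem : ∀ t : ℝ, 0 < t → t ≤ 1/2 → γ t ∈ D := by
      intro t ht1 ht2
      constructor
      · rw [mem_ball, dist_zero_right, hγnorm, abs_of_pos ht1]; linarith
      · intro h0
        rw [Set.mem_singleton_iff] at h0
        have := hγnorm t
        rw [h0, norm_zero] at this
        rw [abs_of_pos ht1] at this
        linarith
    have hγz : γ ‖z‖ = z := by
      rw [hγdef, hu]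
      have : ((‖z‖ : ℝ) : ℂ) ≠ 0 := by
        simpa [Complex.ofReal_ne_zero] using ne_of_gt hz1
      field_simp
    have hγcont : Continuous γ := by
      rw [hγdef]; exact Complex.continuous_ofReal.mul continuous_const
    have hFder : ∀ t ∈ Set.uIcc ‖z‖ (1/2:ℝ), HasDerivAt (f ∘ γ) (u • deriv f (γ t)) t := by
      intro t ht
      rw [Set.uIcc_of_le hz2] at ht
      have htpos : 0 < t := lt_of_lt_of_le hz1 ht.1
      have hmem : γ t ∈ D := hγmem t htpos ht.2
      have hfd : HasDerivAt f (deriv f (γ t)) (γ t) :=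
        (hf.differentiableAt (hDopen.mem_nhds hmem)).hasDerivAt
      have hγd : HasDerivAt γ u t := by
        have h1 : HasDerivAt (fun w : ℂ => w * u) u ((t:ℝ):ℂ) := by
          simpa using (hasDerivAt_id (((t:ℝ)):ℂ)).mul_const u
        simpa [hγdef] using h1.comp_ofReal
      exact hfd.scomp t hγd
    have hmapsIcc : ∀ t ∈ Set.uIcc ‖z‖ (1/2:ℝ), γ t ∈ D := by
      intro t ht
      rw [Set.uIcc_of_le hz2] at ht
      exact hγmem t (lt_of_lt_of_le hz1 ht.1) ht.2
    have hcint : IntervalIntegrable (fun t => u • deriv f (γ t)) volume ‖z‖ (1/2) := by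
      apply ContinuousOn.intervalIntegrable
      exact (hderiv.continuousOn.comp hγcont.continuousOn hmapsIcc).const_smul u
    have hFTC := intervalIntegral.integral_eq_sub_of_hasDerivAt hFder hcint
    have hlogle : Real.log ‖z‖ ≤ Real.log (1/2) := Real.log_le_log hz1 hz2
    have hbound : ‖f (γ (1/2)) - f z‖ ≤ Cd * (Real.log (1/2) - Real.log ‖z‖) := by
      have h2 : ‖f (γ (1/2)) - f z‖ = ‖∫ t in ‖z‖..(1/2:ℝ), u • deriv f (γ t)‖ := by
        rw [hFTC]
        simp only [Function.comp_apply, hγz]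
      rw [h2]
      have h3 := intervalIntegral.norm_integral_le_of_norm_le
        (g := fun t => Cd * t⁻¹) (f := fun t => u • deriv f (γ t)) (μ := volume)
        (a := ‖z‖) (b := (1/2:ℝ)) hz2 ?_ ?_
      · refine h3.trans ?_
        have h4 : (∫ t in ‖z‖..(1/2:ℝ), Cd * t⁻¹)
            = Cd * (Real.log (1/2) - Real.log ‖z‖) := by
          rw [intervalIntegral.integral_const_mul, integral_inv_of_pos hz1 (by norm_num),
            Real.log_div (by norm_num) (ne_of_gt hz1)]
        exact h4.le
      · refine Filter.Eventually.of_forall (fun t ht => ?_)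
        have htpos : 0 < t := lt_trans hz1 ht.1
        have h5 : ‖γ t‖ = t := by rw [hγnorm, abs_of_pos htpos]
        rw [norm_smul, hnu, one_mul]
        calc ‖deriv f (γ t)‖ ≤ Cd / ‖γ t‖ := hpt (γ t) (by rw [h5]; exact htpos)
              (by rw [h5]; linarith [ht.2])
          _ = Cd * t⁻¹ := by rw [h5, div_eq_mul_inv]
      · apply ContinuousOn.intervalIntegrable
        apply continuousOn_const.mul
        apply ContinuousOn.inv₀ continuousOn_id
        intro t ht
        rw [Set.uIcc_of_le hz2] at ht
        exact ne_of_gt (lt_of_lt_of_le hz1 ht.1)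
    have hγhalf : γ (1/2) ∈ Metric.sphere (0:ℂ) (1/2) := by
      rw [mem_sphere_zero_iff_norm, hγnorm]
      norm_num
    have := hM (γ (1/2)) hγhalf
    calc ‖f z‖ = ‖f (γ (1/2)) - (f (γ (1/2)) - f z)‖ := by rw [sub_sub_cancel]
      _ ≤ ‖f (γ (1/2))‖ + ‖f (γ (1/2)) - f z‖ := norm_sub_le _ _
      _ ≤ M + Cd * (Real.log (1/2) - Real.log ‖z‖) := add_le_add this hbound
  -- little-o statement
  have ho : (fun z => f z - f 0) =o[𝓝[≠] (0:ℂ)] fun z => (z - 0)⁻¹ := by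
    rw [Asymptotics.isLittleO_iff]
    intro ε hε
    set K : ℝ := ‖f 0‖ + M + Cd * Real.log (1/2) with hK
    have hψ : Tendsto (fun t : ℝ => t * K - Cd * (Real.log t * t))
        (𝓝[>] (0:ℝ)) (𝓝 0) := by
      have h1 : Tendsto (fun t : ℝ => t * K) (𝓝[>] (0:ℝ)) (𝓝 0) := by
        have := ((continuous_id.tendsto (0:ℝ)).mono_left
          (nhdsWithin_le_nhds : 𝓝[Set.Ioi (0:ℝ)] 0 ≤ 𝓝 0)).mul_const K
        simpa using this
      have h2 : Tendsto (fun t : ℝ => Real.log t * t) (𝓝[>] (0:ℝ)) (𝓝 0) := by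
        have := tendsto_log_mul_rpow_nhdsGT_zero one_pos
        simpa [Real.rpow_one] using this
      have := h1.sub (h2.const_mul Cd)
      simpa using this
    have hnormt : Tendsto (fun z : ℂ => ‖z‖) (𝓝[≠] (0:ℂ)) (𝓝[>] (0:ℝ)) := by
      apply tendsto_nhdsWithin_of_tendsto_nhds_of_eventually_within
      · have := (continuous_norm.tendsto (0:ℂ)).mono_left (nhdsWithin_le_nhds (s := {(0:ℂ)}ᶜ))
        simpa using this
      · filter_upwards [eventually_mem_nhdsWithin] with z hz
        exact norm_pos_iff.mpr hz
    have hev1 : ∀ᶠ z in 𝓝[≠] (0:ℂ), ‖z‖ * K - Cd * (Real.log ‖z‖ * ‖z‖) < ε :=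
      (hψ.comp hnormt).eventually_lt_const hε
    have hev2 : ∀ᶠ z in 𝓝[≠] (0:ℂ), ‖z‖ ≤ 1/2 := by
      have : ∀ᶠ z in 𝓝 (0:ℂ), ‖z‖ ≤ 1/2 := by
        filter_upwards [Metric.closedBall_mem_nhds (0:ℂ) (by norm_num : (0:ℝ) < 1/2)] with z hz
        rwa [mem_closedBall, dist_zero_right] at hz
      exact this.filter_mono nhdsWithin_le_nhds
    filter_upwards [hev1, hev2, eventually_mem_nhdsWithin] with z h1 h2 h3
    have hz0 : 0 < ‖z‖ := norm_pos_iff.mpr h3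
    have hB : ‖f z - f 0‖ ≤ M + Cd * (Real.log (1/2) - Real.log ‖z‖) + ‖f 0‖ := by
      calc ‖f z - f 0‖ ≤ ‖f z‖ + ‖f 0‖ := norm_sub_le _ _
        _ ≤ M + Cd * (Real.log (1/2) - Real.log ‖z‖) + ‖f 0‖ := by
            linarith [hfb z hz0 h2]
    have hKB : ‖z‖ * (M + Cd * (Real.log (1/2) - Real.log ‖z‖) + ‖f 0‖)
        = ‖z‖ * K - Cd * (Real.log ‖z‖ * ‖z‖) := by
      rw [hK]; ring
    have h7 : ‖f z - f 0‖ ≤ ε / ‖z‖ := by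
      rw [le_div_iff₀ hz0]
      calc ‖f z - f 0‖ * ‖z‖ ≤ (M + Cd * (Real.log (1/2) - Real.log ‖z‖) + ‖f 0‖) * ‖z‖ := by
            apply mul_le_mul_of_nonneg_right hB hz0.le
        _ = ‖z‖ * K - Cd * (Real.log ‖z‖ * ‖z‖) := by rw [← hKB]; ring
        _ ≤ ε := le_of_lt h1
    calc ‖f z - f 0‖ ≤ ε / ‖z‖ := h7
      _ = ε * ‖(z - 0)⁻¹‖ := by
          rw [sub_zero, norm_inv, div_eq_mul_inv]
  have hupd := Complex.differentiableOn_update_limUnder_of_isLittleO hball hf ho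
  exact ⟨Function.update f 0 (limUnder (𝓝[≠] (0:ℂ)) f), hupd,
    fun z hz => Function.update_of_ne hz.2 _ f⟩
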